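/- arXiv:2103.15888 — 3 statements merged into one kernel-verified Lean document; each statement's English description precedes it below -/
import Mathlib

section
/- Let f(x,y) be μ_x-strongly convex in x, μ_y-strongly concave in y, and L-Lipschitz smooth. Then the primal function Φ(x) = max_y f(x,y) is differentiable with ∇Φ(x) = ∇_x f(x, y*(x)), is (2L²/μ_y)-Lipschitz smooth, and is μ_x-strongly convex. -/
open Set Filter InnerProductSpace Topology Asymptotics

/-- Gradient inequality for uniformly convex functions. -/
private lemma grad_ineq_uc {E : Type*} [NormedAddCommGroup E] [InnerProductSpace ℝ E]
    [CompleteSpace E] {g : E → ℝ} {φ : ℝ → ℝ} (hg : UniformConvexOn Set.univ φ g)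
    {x gx : E} (hgx : HasGradientAt g gx x) (y : E) :
    g x + inner ℝ gx (y - x) + φ ‖x - y‖ ≤ g y := by
  have hc : HasDerivAt (fun t : ℝ => x + t • (y - x)) (y - x) 0 := by
    simpa using ((hasDerivAt_id (0:ℝ)).smul_const (y - x)).const_add x
  have hFD : HasFDerivAt g (toDual ℝ E gx) x := hasGradientAt_iff_hasFDerivAt.1 hgx
  have hx0 : x + (0:ℝ) • (y - x) = x := by simp
  have hψ : HasDerivAt (fun t : ℝ => g (x + t • (y - x))) (inner ℝ gx (y - x)) 0 := by
    have := HasFDerivAt.comp_hasDerivAt (0:ℝ) (by rw [hx0]; exact hFD) hc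
    simp at this
    exact this
  set ψ : ℝ → ℝ := fun t : ℝ => g (x + t • (y - x)) with hψdef
  have hslope : Tendsto (slope ψ 0) (𝓝[>] 0) (𝓝 (inner ℝ gx (y - x))) :=
    (hasDerivAt_iff_tendsto_slope.1 hψ).mono_left
      (nhdsWithin_mono _ (fun t ht => ne_of_gt ht))
  have hrhs : Tendsto (fun t : ℝ => (g y - g x) - (1 - t) * φ ‖x - y‖) (𝓝[>] 0)
      (𝓝 ((g y - g x) - φ ‖x - y‖)) := by
    have : Continuous (fun t : ℝ => (g y - g x) - (1 - t) * φ ‖x - y‖) := by continuity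
    have := this.tendsto' 0 ((g y - g x) - φ ‖x - y‖) (by ring_nf)
    exact this.mono_left nhdsWithin_le_nhds
  have hev : ∀ᶠ t in 𝓝[>] (0:ℝ),
      slope ψ 0 t ≤ (g y - g x) - (1 - t) * φ ‖x - y‖ := by
    filter_upwards [Ioc_mem_nhdsGT (by norm_num : (0:ℝ) < 1)] with t ht
    have hconv := hg.2 (Set.mem_univ x) (Set.mem_univ y)
      (show (0:ℝ) ≤ 1 - t by linarith [ht.2]) ht.1.le (show (1 - t) + t = 1 by ring)
    have hcomb : (1 - t) • x + t • y = x + t • (y - x) := by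
      simp [smul_sub, sub_smul]; abel
    rw [hcomb, smul_eq_mul, smul_eq_mul] at hconv
    have hψ0 : ψ 0 = g x := by simp [hψdef]
    have hst : slope ψ 0 t = (ψ t - g x) / t := by
      rw [slope_def_field, hψ0]; ring_nf
    rw [hst, div_le_iff₀ ht.1]
    have : ψ t = g (x + t • (y - x)) := rfl
    nlinarith [hconv]
  have := le_of_tendsto_of_tendsto hslope hrhs hev
  linarith

/-- Gradient inequality for uniformly concave functions. -/
private lemma grad_ineq_ucc {E : Type*} [NormedAddCommGroup E] [InnerProductSpace ℝ E]
    [CompleteSpace E] {g : E → ℝ} {φ : ℝ → ℝ} (hg : UniformConcaveOn Set.univ φ g)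
    {x gx : E} (hgx : HasGradientAt g gx x) (y : E) :
    g y ≤ g x + inner ℝ gx (y - x) - φ ‖x - y‖ := by
  have hneg : HasGradientAt (fun u => -(g u)) (-gx) x := by
    show HasFDerivAt _ (toDual ℝ E (-gx)) x
    rw [map_neg]
    exact (hasGradientAt_iff_hasFDerivAt.1 hgx).neg
  have := grad_ineq_uc hg.neg hneg y
  simp only [inner_neg_left, Pi.neg_apply] at this
  linarith

/-- If `f(x,y)` is `μx`-strongly convex in `x`, `μy`-strongly concave in `y`,
and `L`-Lipschitz smooth, then the primal function `Φ(x) = max_y f(x,y) = f(x, y*(x))` is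
differentiable with `∇Φ(x) = ∇ₓ f(x, y*(x))`, is `(2L²/μy)`-Lipschitz smooth, and is
`μx`-strongly convex. -/
theorem primal_function_properties
    {E F : Type*} [NormedAddCommGroup E] [InnerProductSpace ℝ E] [CompleteSpace E]
    [NormedAddCommGroup F] [InnerProductSpace ℝ F] [CompleteSpace F]
    (f : E → F → ℝ) (L μx μy : ℝ) (hμx : 0 < μx) (hμy : 0 < μy) (hLμ : μy ≤ L)
    (hdiffx : ∀ y, Differentiable ℝ (fun x => f x y))
    (hdiffy : ∀ x, Differentiable ℝ (f x))
    (hscx : ∀ y, StrongConvexOn Set.univ μx (fun x => f x y))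
    (hscy : ∀ x, StrongConcaveOn Set.univ μy (f x))
    (hLip : ∀ (x₁ x₂ : E) (y₁ y₂ : F),
      ‖gradient (fun x => f x y₁) x₁ - gradient (fun x => f x y₂) x₂‖
        ≤ L * (‖x₁ - x₂‖ + ‖y₁ - y₂‖) ∧
      ‖gradient (f x₁) y₁ - gradient (f x₂) y₂‖
        ≤ L * (‖x₁ - x₂‖ + ‖y₁ - y₂‖))
    (ystar : E → F) (hystar : ∀ x, IsMaxOn (f x) Set.univ (ystar x)) :
    (∀ x : E, HasGradientAt (fun u => f u (ystar u))
        (gradient (fun u => f u (ystar x)) x) x) ∧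
    (∀ x₁ x₂ : E,
      ‖gradient (fun u => f u (ystar u)) x₁ - gradient (fun u => f u (ystar u)) x₂‖
        ≤ (2 * L ^ 2 / μy) * ‖x₁ - x₂‖) ∧
    StrongConvexOn Set.univ μx (fun u => f u (ystar u)) := by
  have hL : 0 < L := lt_of_lt_of_le hμy hLμ
  have hmax : ∀ x y, f x y ≤ f x (ystar x) := fun x y =>
    (isMaxOn_iff.1 (hystar x)) y (Set.mem_univ y)
  -- gradient in y vanishes at the maximizer
  have hgrady0 : ∀ x, gradient (f x) (ystar x) = 0 := by
    intro x
    have h1 : fderiv ℝ (f x) (ystar x) = 0 :=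
      ((hystar x).isLocalMax Filter.univ_mem).fderiv_eq_zero
    rw [gradient, h1, map_zero]
  have hGx : ∀ (y : F) (x : E),
      HasGradientAt (fun u => f u y) (gradient (fun u => f u y) x) x :=
    fun y x => ((hdiffx y) x).hasGradientAt
  have hGy : ∀ (x : E) (y : F), HasGradientAt (f x) (gradient (f x) y) y :=
    fun x y => ((hdiffy x) y).hasGradientAt
  -- Lipschitzness of ystar
  have hyLip : ∀ x₁ x₂ : E, ‖ystar x₁ - ystar x₂‖ ≤ (L / μy) * ‖x₁ - x₂‖ := by
    intro x₁ x₂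
    set y₁ := ystar x₁
    set y₂ := ystar x₂
    have hA := grad_ineq_ucc (hscy x₂) (hGy x₂ y₁) y₂
    have hB := grad_ineq_ucc (hscy x₂) (hGy x₂ y₂) y₁
    rw [hgrady0 x₂] at hB
    simp only [inner_zero_left] at hB
    have hnrev : ‖y₂ - y₁‖ = ‖y₁ - y₂‖ := norm_sub_rev _ _
    rw [hnrev] at hB
    -- inner ℝ term bound
    have hinner : (inner ℝ (gradient (f x₂) y₁) (y₂ - y₁) : ℝ)
        = inner ℝ (gradient (f x₂) y₁ - gradient (f x₁) y₁) (y₂ - y₁) := by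
      rw [inner_sub_left, hgrady0 x₁]
      simp
    have hcs : (inner ℝ (gradient (f x₂) y₁ - gradient (f x₁) y₁) (y₂ - y₁) : ℝ)
        ≤ ‖gradient (f x₂) y₁ - gradient (f x₁) y₁‖ * ‖y₂ - y₁‖ :=
      real_inner_le_norm _ _
    have hlip := (hLip x₂ x₁ y₁ y₁).2
    simp only [sub_self, norm_zero, add_zero] at hlip
    have hkey : μy * ‖y₁ - y₂‖ ^ 2 ≤ L * ‖x₂ - x₁‖ * ‖y₂ - y₁‖ := by
      have h1 : (inner ℝ (gradient (f x₂) y₁) (y₂ - y₁) : ℝ)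
          ≤ L * ‖x₂ - x₁‖ * ‖y₂ - y₁‖ := by
        rw [hinner]
        calc (inner ℝ (gradient (f x₂) y₁ - gradient (f x₁) y₁) (y₂ - y₁) : ℝ)
            ≤ ‖gradient (f x₂) y₁ - gradient (f x₁) y₁‖ * ‖y₂ - y₁‖ := hcs
          _ ≤ L * ‖x₂ - x₁‖ * ‖y₂ - y₁‖ := by
              apply mul_le_mul_of_nonneg_right hlip (norm_nonneg _)
      nlinarith [hA, hB]
    rcases eq_or_lt_of_le (norm_nonneg (y₁ - y₂)) with h0 | h0
    · rw [← h0]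
      positivity
    · have hd : ‖y₂ - y₁‖ = ‖y₁ - y₂‖ := norm_sub_rev _ _
      rw [hd] at hkey
      have h2 : μy * ‖y₁ - y₂‖ ≤ L * ‖x₂ - x₁‖ := by nlinarith
      rw [norm_sub_rev x₂ x₁] at h2
      rw [div_mul_eq_mul_div, le_div_iff₀ hμy]
      linarith
  -- the claimed gradient
  have hmain : ∀ x : E, HasGradientAt (fun u => f u (ystar u))
      (gradient (fun u => f u (ystar x)) x) x := by
    intro x
    set G : E := gradient (fun u => f u (ystar x)) x with hGdef
    rw [hasGradientAt_iff_isLittleO]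
    set C : ℝ := L * (1 + L / μy) with hCdef
    have hbound : ∀ u : E, ‖f u (ystar u) - f x (ystar x) - inner ℝ G (u - x)‖
        ≤ C * (‖u - x‖ * ‖u - x‖) := by
      intro u
      have hlow := grad_ineq_uc (hscx (ystar x)) (hGx (ystar x) x) u
      have hlow2 : f x (ystar x) + inner ℝ G (u - x) ≤ f u (ystar u) := by
        have h1 : f u (ystar x) ≤ f u (ystar u) := hmax u (ystar x)
        nlinarith [sq_nonneg ‖x - u‖]
      set Gu : E := gradient (fun z => f z (ystar u)) u with hGudef
      have hup := grad_ineq_uc (hscx (ystar u)) (hGx (ystar u) u) x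
      have hxmu : x - u = -(u - x) := by abel
      rw [hxmu, inner_neg_right] at hup
      have hup2 : f u (ystar u) - f x (ystar x) ≤ (inner ℝ Gu (u - x) : ℝ) := by
        have h1 : f x (ystar u) ≤ f x (ystar x) := hmax x (ystar u)
        nlinarith [sq_nonneg ‖u - x‖]
      have hdiffGu : (inner ℝ Gu (u - x) : ℝ) - inner ℝ G (u - x)
          ≤ C * (‖u - x‖ * ‖u - x‖) := by
        have h1 : (inner ℝ Gu (u - x) : ℝ) - inner ℝ G (u - x) = inner ℝ (Gu - G) (u - x) := by
          rw [inner_sub_left]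
        rw [h1]
        calc (inner ℝ (Gu - G) (u - x) : ℝ) ≤ ‖Gu - G‖ * ‖u - x‖ := real_inner_le_norm _ _
          _ ≤ (L * (‖u - x‖ + ‖ystar u - ystar x‖)) * ‖u - x‖ := by
              apply mul_le_mul_of_nonneg_right ((hLip u x (ystar u) (ystar x)).1)
                (norm_nonneg _)
          _ ≤ C * (‖u - x‖ * ‖u - x‖) := by
              have h2 := hyLip u x
              have h3 : ‖u - x‖ + ‖ystar u - ystar x‖ ≤ (1 + L / μy) * ‖u - x‖ := by
                nlinarith
              rw [hCdef]
              nlinarith [mul_le_mul_of_nonneg_left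
                (mul_le_mul_of_nonneg_right h3 (norm_nonneg (u - x))) hL.le]
      rw [Real.norm_eq_abs, abs_le]
      constructor
      · have : 0 ≤ C * (‖u - x‖ * ‖u - x‖) := by positivity
        linarith
      · linarith
    have h1 : (fun u => f u (ystar u) - f x (ystar x) - inner ℝ G (u - x))
        =O[𝓝 x] fun u => ‖u - x‖ * ‖u - x‖ := by
      rw [isBigO_iff]
      refine ⟨C, Filter.Eventually.of_forall fun u => ?_⟩
      calc ‖f u (ystar u) - f x (ystar x) - inner ℝ G (u - x)‖
          ≤ C * (‖u - x‖ * ‖u - x‖) := hbound u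
        _ ≤ C * ‖(‖u - x‖ * ‖u - x‖)‖ := by
            rw [Real.norm_of_nonneg (by positivity)]
    have ha : (fun u : E => ‖u - x‖) =o[𝓝 x] (fun _ => (1:ℝ)) := by
      rw [isLittleO_one_iff]
      exact ((continuous_id.sub continuous_const).norm).tendsto' x 0 (by simp)
    have hb : (fun u : E => ‖u - x‖) =O[𝓝 x] (fun u : E => ‖u - x‖) :=
      isBigO_refl _ _
    have h2 : (fun u : E => ‖u - x‖ * ‖u - x‖) =o[𝓝 x] fun u => u - x := by
      have h4 := ha.mul_isBigO hb
      simp only [one_mul] at h4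
      exact h4.of_norm_right
    exact h1.trans_isLittleO h2
  refine ⟨hmain, ?_, ?_⟩
  · intro x₁ x₂
    rw [(hmain x₁).gradient, (hmain x₂).gradient]
    calc ‖gradient (fun u => f u (ystar x₁)) x₁ - gradient (fun u => f u (ystar x₂)) x₂‖
        ≤ L * (‖x₁ - x₂‖ + ‖ystar x₁ - ystar x₂‖) :=
          (hLip x₁ x₂ (ystar x₁) (ystar x₂)).1
      _ ≤ L * (‖x₁ - x₂‖ + (L / μy) * ‖x₁ - x₂‖) := by
          have := hyLip x₁ x₂
          nlinarith
      _ ≤ (2 * L ^ 2 / μy) * ‖x₁ - x₂‖ := by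
          have h1 : L * (1 + L / μy) ≤ 2 * L ^ 2 / μy := by
            have e : L * (1 + L / μy) = (L * μy + L ^ 2) / μy := by
              field_simp
            rw [e, div_le_div_iff₀ hμy hμy]
            nlinarith [mul_le_mul_of_nonneg_left hLμ hL.le, hμy.le]
          have h2 : L * (‖x₁ - x₂‖ + L / μy * ‖x₁ - x₂‖)
              = L * (1 + L / μy) * ‖x₁ - x₂‖ := by ring
          rw [h2]
          exact mul_le_mul_of_nonneg_right h1 (norm_nonneg _)
  · refine ⟨convex_univ, fun x₁ _ x₂ _ a b ha hb hab => ?_⟩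
    set z := a • x₁ + b • x₂
    have h1 := (hscx (ystar z)).2 (Set.mem_univ x₁) (Set.mem_univ x₂) ha hb hab
    have h2 : f x₁ (ystar z) ≤ f x₁ (ystar x₁) := hmax x₁ (ystar z)
    have h3 : f x₂ (ystar z) ≤ f x₂ (ystar x₂) := hmax x₂ (ystar z)
    simp only [smul_eq_mul] at h1 ⊢
    nlinarith [mul_le_mul_of_nonneg_left h2 ha, mul_le_mul_of_nonneg_left h3 hb]
end

section
/- Zero-chain property of F_d: define X_k = span{e_1,…,e_k} ⊂ ℝ^{d+1} and Y_k = span{ê_{d+2},…,ê_{d−k+2}} ⊂ ℝ^{d+2} (with X_0 = Y_0 = {0}). Then: (a) if x = 0 and y = 0 then ∇_x F_d ∈ X_1 and ∇_y F_d = 0; (b) if x ∈ X_k and y ∈ Y_k then ∇_x F_d(x,y) ∈ X_{k+1} and ∇_y F_d(x,y) ∈ Y_k; (c) if x ∈ X_{k+1} and y ∈ Y_k then ∇_x F_d(x,y) ∈ X_{k+1} and ∇_y F_d(x,y) ∈ Y_{k+1}. -/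
open scoped BigOperators

/-- The matrix `B_d ∈ ℝ^{(d+2)×(d+1)}` of the hard instance (0-indexed):
`(B_d x)_0 = x_d`, `(B_d x)_i = x_{d-i} − x_{d-i+1}` for `1 ≤ i ≤ d`, and
`(B_d x)_{d+1} = α^{1/4} x_0`. -/
noncomputable def Bmat (d : ℕ) (α : ℝ) : Matrix (Fin (d + 2)) (Fin (d + 1)) ℝ :=
  fun i j =>
    if (i : ℕ) = 0 then (if (j : ℕ) = d then 1 else 0)
    else if (i : ℕ) = d + 1 then (if (j : ℕ) = 0 then α ^ ((1 : ℝ) / 4) else 0)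
    else if (j : ℕ) = d - (i : ℕ) then 1
    else if (j : ℕ) = d - (i : ℕ) + 1 then -1
    else 0

/-- The linear action of `B_d` as a map between Euclidean spaces. -/
noncomputable def Bapp (d : ℕ) (α : ℝ) (x : EuclideanSpace ℝ (Fin (d + 1))) :
    EuclideanSpace ℝ (Fin (d + 2)) :=
  (EuclideanSpace.equiv (Fin (d + 2)) ℝ).symm
    ((Bmat d α).mulVec ((EuclideanSpace.equiv (Fin (d + 1)) ℝ) x))

/-- `Γ(t) = 120 ∫_1^t s²(s−1)/(1+s²) ds`, the nonconvex component of the hard instance. -/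
noncomputable def Gam (t : ℝ) : ℝ := 120 * ∫ s in (1 : ℝ)..t, s ^ 2 * (s - 1) / (1 + s ^ 2)

/-- The NC-SC hard instance `F_d`. -/
noncomputable def Fd (d : ℕ) (α lam1 lam2 : ℝ) (x : EuclideanSpace ℝ (Fin (d + 1)))
    (y : EuclideanSpace ℝ (Fin (d + 2))) : ℝ :=
  lam1 * (inner ℝ (Bapp d α x) y : ℝ) - lam2 * ‖y‖ ^ 2
    - lam1 ^ 2 * Real.sqrt α / (2 * lam2) * x 0
    + lam1 ^ 2 * α / (2 * lam2) * ∑ i : Fin d, Gam (x i.castSucc)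
    - lam1 ^ 2 * α / (4 * lam2) * (x (Fin.last d)) ^ 2
    + lam1 ^ 2 * Real.sqrt α / (4 * lam2)

/-- `X_k = span{e_1, …, e_k}` (0-indexed: coordinates `< k`). -/
noncomputable def Xsub (d k : ℕ) : Submodule ℝ (EuclideanSpace ℝ (Fin (d + 1))) :=
  Submodule.span ℝ {v | ∃ i : Fin (d + 1), (i : ℕ) < k ∧ v = EuclideanSpace.single i 1}

/-- `Y_k = span{ê_{d+2}, …, ê_{d−k+2}}` (0-indexed: coordinates `j` with `j + k ≥ d + 1`). -/
noncomputable def Ysub (d k : ℕ) : Submodule ℝ (EuclideanSpace ℝ (Fin (d + 2))) :=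
  Submodule.span ℝ {v | ∃ j : Fin (d + 2), d + 1 ≤ (j : ℕ) + k ∧ v = EuclideanSpace.single j 1}

/-! ### Auxiliary material -/

/-- Submodule of vectors vanishing on a coordinate set. -/
def coordZero (n : ℕ) (S : Set (Fin n)) : Submodule ℝ (EuclideanSpace ℝ (Fin n)) where
  carrier := {x | ∀ j ∈ S, x j = 0}
  add_mem' := by
    intro a b ha hb j hj
    show a j + b j = 0
    rw [ha j hj, hb j hj, add_zero]
  zero_mem' := by intro j hj; rfl
  smul_mem' := by
    intro c a ha j hj
    show c * a j = 0
    rw [ha j hj, mul_zero]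

lemma span_single_apply {n : ℕ} (P : Fin n → Prop)
    {x : EuclideanSpace ℝ (Fin n)}
    (hx : x ∈ Submodule.span ℝ
      {v : EuclideanSpace ℝ (Fin n) | ∃ i, P i ∧ v = EuclideanSpace.single i 1})
    {j : Fin n} (hj : ¬ P j) : x j = 0 := by
  have hle : Submodule.span ℝ
      {v : EuclideanSpace ℝ (Fin n) | ∃ i, P i ∧ v = EuclideanSpace.single i 1}
      ≤ coordZero n {j | ¬ P j} := by
    rw [Submodule.span_le]
    rintro v ⟨i, hPi, rfl⟩ j hj
    rw [EuclideanSpace.single_apply]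
    simp only [Set.mem_setOf_eq] at hj
    rw [if_neg]
    rintro rfl; exact hj hPi
  exact hle hx j hj

lemma mem_span_single {n : ℕ} (P : Fin n → Prop) [DecidablePred P]
    {x : EuclideanSpace ℝ (Fin n)} (h : ∀ i, ¬ P i → x i = 0) :
    x ∈ Submodule.span ℝ
      {v : EuclideanSpace ℝ (Fin n) | ∃ i, P i ∧ v = EuclideanSpace.single i 1} := by
  have hx : x = ∑ i : Fin n, x i • (EuclideanSpace.single i (1:ℝ)) := by
    ext j
    rw [WithLp.ofLp_sum, Finset.sum_apply]
    simp [EuclideanSpace.single_apply]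
  rw [hx]
  refine Submodule.sum_mem _ fun i _ => ?_
  by_cases hP : P i
  · exact Submodule.smul_mem _ _ (Submodule.subset_span ⟨i, hP, rfl⟩)
  · rw [h i hP, zero_smul]; exact Submodule.zero_mem _

lemma Xsub_coord {d k : ℕ} {x : EuclideanSpace ℝ (Fin (d + 1))} (hx : x ∈ Xsub d k)
    (j : Fin (d + 1)) (hj : k ≤ (j : ℕ)) : x j = 0 :=
  span_single_apply _ hx (by omega)

lemma mem_Xsub {d k : ℕ} {x : EuclideanSpace ℝ (Fin (d + 1))}
    (h : ∀ j : Fin (d + 1), k ≤ (j : ℕ) → x j = 0) : x ∈ Xsub d k :=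
  mem_span_single _ fun i hi => h i (by omega)

lemma Ysub_coord {d k : ℕ} {y : EuclideanSpace ℝ (Fin (d + 2))} (hy : y ∈ Ysub d k)
    (i : Fin (d + 2)) (hi : (i : ℕ) + k < d + 1) : y i = 0 :=
  span_single_apply _ hy (by omega)

lemma mem_Ysub {d k : ℕ} {y : EuclideanSpace ℝ (Fin (d + 2))}
    (h : ∀ i : Fin (d + 2), (i : ℕ) + k < d + 1 → y i = 0) : y ∈ Ysub d k :=
  mem_span_single _ fun i hi => h i (by omega)

/-- The transpose action `B_dᵀ`. -/
noncomputable def BT (d : ℕ) (α : ℝ) (y : EuclideanSpace ℝ (Fin (d + 2))) :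
    EuclideanSpace ℝ (Fin (d + 1)) :=
  (EuclideanSpace.equiv (Fin (d + 1)) ℝ).symm
    ((Bmat d α).transpose.mulVec ((EuclideanSpace.equiv (Fin (d + 2)) ℝ) y))

lemma Bapp_apply (d : ℕ) (α : ℝ) (x : EuclideanSpace ℝ (Fin (d + 1))) (i : Fin (d + 2)) :
    Bapp d α x i = ∑ j : Fin (d + 1), Bmat d α i j * x j := rfl

lemma BT_apply (d : ℕ) (α : ℝ) (y : EuclideanSpace ℝ (Fin (d + 2))) (j : Fin (d + 1)) :
    BT d α y j = ∑ i : Fin (d + 2), Bmat d α i j * y i := by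
  simp [BT, Matrix.mulVec, dotProduct, Matrix.transpose_apply]

lemma inner_Bapp (d : ℕ) (α : ℝ) (x : EuclideanSpace ℝ (Fin (d + 1)))
    (y : EuclideanSpace ℝ (Fin (d + 2))) :
    (inner ℝ (Bapp d α x) y : ℝ) = (inner ℝ (BT d α y) x : ℝ) := by
  simp only [PiLp.inner_apply, RCLike.inner_apply, conj_trivial, Bapp_apply, BT_apply]
  simp only [Finset.mul_sum]
  rw [Finset.sum_comm]
  congr 1; funext j; congr 1; funext i; ring

noncomputable def gam' (t : ℝ) : ℝ := 120 * (t ^ 2 * (t - 1) / (1 + t ^ 2))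

lemma hasDerivAt_Gam (t : ℝ) : HasDerivAt Gam (gam' t) t := by
  have hc : Continuous fun s : ℝ => s ^ 2 * (s - 1) / (1 + s ^ 2) := by
    apply Continuous.div (by continuity) (by continuity)
    intro s; positivity
  exact ((hc.integral_hasStrictDerivAt 1 t).hasDerivAt).const_mul 120

lemma gam'_zero : gam' 0 = 0 := by norm_num [gam']

lemma hasGradientAt_of_inner {F : Type*} [NormedAddCommGroup F] [InnerProductSpace ℝ F]
    [CompleteSpace F] {f : F → ℝ} {L : F →L[ℝ] ℝ} {g x : F} (hL : HasFDerivAt f L x)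
    (h : ∀ v, L v = (inner ℝ g v : ℝ)) : HasGradientAt f g x := by
  rw [hasGradientAt_iff_hasFDerivAt]
  have hg : (InnerProductSpace.toDual ℝ F) g = L := by
    ext v
    simp [InnerProductSpace.toDual_apply_apply, h v]
  rw [hg]; exact hL

/-- The `y`-gradient of `F_d`. -/
lemma hasGradientAt_Fd_y (d : ℕ) (α lam1 lam2 : ℝ) (x : EuclideanSpace ℝ (Fin (d + 1)))
    (y : EuclideanSpace ℝ (Fin (d + 2))) :
    HasGradientAt (Fd d α lam1 lam2 x) (lam1 • Bapp d α x - (2 * lam2) • y) y := by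
  set a := Bapp d α x
  have heq : Fd d α lam1 lam2 x = fun y' : EuclideanSpace ℝ (Fin (d + 2)) =>
      lam1 * (inner ℝ a y' : ℝ) - lam2 * (inner ℝ y' y' : ℝ)
      - lam1 ^ 2 * Real.sqrt α / (2 * lam2) * x 0
      + lam1 ^ 2 * α / (2 * lam2) * ∑ i : Fin d, Gam (x i.castSucc)
      - lam1 ^ 2 * α / (4 * lam2) * (x (Fin.last d)) ^ 2
      + lam1 ^ 2 * Real.sqrt α / (4 * lam2) := by
    funext y'
    rw [Fd, real_inner_self_eq_norm_sq]
  rw [heq]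
  have hA : HasFDerivAt (fun y' : EuclideanSpace ℝ (Fin (d + 2)) => (inner ℝ a y' : ℝ))
      (innerSL ℝ a) y := (innerSL ℝ a).hasFDerivAt
  have hB : HasFDerivAt (fun y' : EuclideanSpace ℝ (Fin (d + 2)) => (inner ℝ y' y' : ℝ))
      ((fderivInnerCLM ℝ (y, y)).comp ((ContinuousLinearMap.id ℝ _).prod
        (ContinuousLinearMap.id ℝ _))) y := (hasFDerivAt_id y).inner ℝ (hasFDerivAt_id y)
  have hT := ((((hA.const_mul lam1).sub (hB.const_mul lam2)).sub_const
      (lam1 ^ 2 * Real.sqrt α / (2 * lam2) * x 0)).add_const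
      (lam1 ^ 2 * α / (2 * lam2) * ∑ i : Fin d, Gam (x i.castSucc))).sub_const
      (lam1 ^ 2 * α / (4 * lam2) * (x (Fin.last d)) ^ 2) |>.add_const
      (lam1 ^ 2 * Real.sqrt α / (4 * lam2))
  refine hasGradientAt_of_inner hT fun v => ?_
  simp only [ContinuousLinearMap.sub_apply, ContinuousLinearMap.smul_apply,
    ContinuousLinearMap.comp_apply, ContinuousLinearMap.prod_apply, ContinuousLinearMap.id_apply,
    fderivInnerCLM_apply, innerSL_apply_apply, inner_sub_left, real_inner_smul_left, smul_eq_mul]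
  rw [real_inner_comm v y]
  ring

/-- The `x`-gradient of `F_d`. -/
noncomputable def gradX (d : ℕ) (α lam1 lam2 : ℝ) (x : EuclideanSpace ℝ (Fin (d + 1)))
    (y : EuclideanSpace ℝ (Fin (d + 2))) : EuclideanSpace ℝ (Fin (d + 1)) :=
  lam1 • BT d α y
    - (lam1 ^ 2 * Real.sqrt α / (2 * lam2)) • EuclideanSpace.single 0 1
    + (lam1 ^ 2 * α / (2 * lam2)) •
        ∑ i : Fin d, gam' (x i.castSucc) • EuclideanSpace.single i.castSucc (1 : ℝ)
    - (lam1 ^ 2 * α / (4 * lam2) * (2 * x (Fin.last d))) •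
        EuclideanSpace.single (Fin.last d) 1

lemma hasGradientAt_Fd_x (d : ℕ) (α lam1 lam2 : ℝ) (x : EuclideanSpace ℝ (Fin (d + 1)))
    (y : EuclideanSpace ℝ (Fin (d + 2))) :
    HasGradientAt (fun x' => Fd d α lam1 lam2 x' y) (gradX d α lam1 lam2 x y) x := by
  have heq : (fun x' => Fd d α lam1 lam2 x' y) = fun x' : EuclideanSpace ℝ (Fin (d + 1)) =>
      lam1 * (inner ℝ (BT d α y) x' : ℝ) - lam2 * ‖y‖ ^ 2
      - lam1 ^ 2 * Real.sqrt α / (2 * lam2) * x' 0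
      + lam1 ^ 2 * α / (2 * lam2) * ∑ i : Fin d, Gam (x' i.castSucc)
      - lam1 ^ 2 * α / (4 * lam2) * (x' (Fin.last d)) ^ 2
      + lam1 ^ 2 * Real.sqrt α / (4 * lam2) := by
    funext x'
    rw [Fd, inner_Bapp]
  rw [heq]
  have hA : HasFDerivAt (fun x' : EuclideanSpace ℝ (Fin (d + 1)) => (inner ℝ (BT d α y) x' : ℝ))
      (innerSL ℝ (BT d α y)) x := (innerSL ℝ (BT d α y)).hasFDerivAt
  have hproj : ∀ j : Fin (d + 1),
      HasFDerivAt (fun x' : EuclideanSpace ℝ (Fin (d + 1)) => x' j)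
        (EuclideanSpace.proj (𝕜 := ℝ) j) x := by
    intro j
    have h : ⇑(EuclideanSpace.proj (𝕜 := ℝ) j) =
        fun x' : EuclideanSpace ℝ (Fin (d + 1)) => x' j := rfl
    rw [← h]
    exact (EuclideanSpace.proj (𝕜 := ℝ) j).hasFDerivAt
  have hsum : HasFDerivAt
      (fun x' : EuclideanSpace ℝ (Fin (d + 1)) => ∑ i : Fin d, Gam (x' i.castSucc))
      (∑ i : Fin d, gam' (x i.castSucc) • EuclideanSpace.proj (𝕜 := ℝ) i.castSucc) x := by
    apply HasFDerivAt.fun_sum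
      (A := fun (i : Fin d) (x' : EuclideanSpace ℝ (Fin (d + 1))) => Gam (x' i.castSucc))
    intro i _
    have hG := (hasDerivAt_Gam (x i.castSucc)).comp_hasFDerivAt x (hproj i.castSucc)
    exact hG
  have hsq : HasFDerivAt
      (fun x' : EuclideanSpace ℝ (Fin (d + 1)) => (x' (Fin.last d)) ^ 2)
      ((2 * x (Fin.last d)) • EuclideanSpace.proj (𝕜 := ℝ) (Fin.last d)) x := by
    have h2 : HasDerivAt (fun t : ℝ => t ^ 2) (2 * x (Fin.last d)) (x (Fin.last d)) := by
      simpa using hasDerivAt_pow 2 (x (Fin.last d))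
    exact h2.comp_hasFDerivAt x (hproj (Fin.last d))
  have hT := ((((hA.const_mul lam1).sub_const (lam2 * ‖y‖ ^ 2)).sub
      ((hproj 0).const_mul (lam1 ^ 2 * Real.sqrt α / (2 * lam2)))).add
      (hsum.const_mul (lam1 ^ 2 * α / (2 * lam2)))).sub
      (hsq.const_mul (lam1 ^ 2 * α / (4 * lam2))) |>.add_const
      (lam1 ^ 2 * Real.sqrt α / (4 * lam2))
  refine hasGradientAt_of_inner hT fun v => ?_
  simp only [gradX, ContinuousLinearMap.sub_apply, ContinuousLinearMap.add_apply,
    ContinuousLinearMap.smul_apply, ContinuousLinearMap.sum_apply, innerSL_apply_apply,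
    PiLp.proj_apply, inner_sub_left, inner_add_left, real_inner_smul_left, sum_inner,
    EuclideanSpace.inner_single_left, conj_trivial, smul_eq_mul, one_mul,
    Finset.mul_sum]
  ring

lemma BT_coord_zero (d : ℕ) (α : ℝ) (k : ℕ) (y : EuclideanSpace ℝ (Fin (d + 2)))
    (hy : ∀ i : Fin (d + 2), (i : ℕ) + k < d + 1 → y i = 0)
    (j : Fin (d + 1)) (hj : k + 1 ≤ (j : ℕ)) :
    ∑ i : Fin (d + 2), Bmat d α i j * y i = 0 := by
  apply Finset.sum_eq_zero
  intro i _
  rcases lt_or_ge ((i : ℕ) + k) (d + 1) with h | h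
  · rw [hy i h, mul_zero]
  · have hi2 : (i : ℕ) < d + 2 := i.isLt
    have hj1 : (j : ℕ) < d + 1 := j.isLt
    unfold Bmat
    split_ifs with h0 h0' h1 h1' h2 h3 <;> first | rw [zero_mul] | (exfalso; omega)

lemma Bapp_coord_zero (d : ℕ) (α : ℝ) (K : ℕ) (x : EuclideanSpace ℝ (Fin (d + 1)))
    (hx : ∀ j : Fin (d + 1), K ≤ (j : ℕ) → x j = 0)
    (i : Fin (d + 2)) (hi : (i : ℕ) + K < d + 1) :
    ∑ j : Fin (d + 1), Bmat d α i j * x j = 0 := by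
  apply Finset.sum_eq_zero
  intro j _
  rcases le_or_gt K (j : ℕ) with h | h
  · rw [hx j h, mul_zero]
  · have hi2 : (i : ℕ) < d + 2 := i.isLt
    have hj1 : (j : ℕ) < d + 1 := j.isLt
    unfold Bmat
    split_ifs with h0 h0' h1 h1' h2 h3 <;> first | rw [zero_mul] | (exfalso; omega)

lemma gradX_mem (d : ℕ) (α lam1 lam2 : ℝ) (k : ℕ) (x : EuclideanSpace ℝ (Fin (d + 1)))
    (y : EuclideanSpace ℝ (Fin (d + 2)))
    (hx : ∀ j : Fin (d + 1), k + 1 ≤ (j : ℕ) → x j = 0)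
    (hy : ∀ i : Fin (d + 2), (i : ℕ) + k < d + 1 → y i = 0) :
    gradX d α lam1 lam2 x y ∈ Xsub d (k + 1) := by
  apply mem_Xsub
  intro j hj
  show lam1 * BT d α y j
      - (lam1 ^ 2 * Real.sqrt α / (2 * lam2)) *
        (EuclideanSpace.single 0 1 : EuclideanSpace ℝ (Fin (d + 1))) j
      + (lam1 ^ 2 * α / (2 * lam2)) *
        ((∑ i : Fin d, gam' (x i.castSucc) • EuclideanSpace.single i.castSucc (1 : ℝ) :
          EuclideanSpace ℝ (Fin (d + 1))) j)
      - (lam1 ^ 2 * α / (4 * lam2) * (2 * x (Fin.last d))) *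
        (EuclideanSpace.single (Fin.last d) 1 : EuclideanSpace ℝ (Fin (d + 1))) j = 0
  have h1 : BT d α y j = 0 := by
    rw [BT_apply]
    exact BT_coord_zero d α k y hy j hj
  have h2 : (EuclideanSpace.single 0 1 : EuclideanSpace ℝ (Fin (d + 1))) j = 0 := by
    rw [EuclideanSpace.single_apply, if_neg]
    intro hj0
    rw [hj0] at hj
    simp at hj
  have h3 : (∑ i : Fin d, gam' (x i.castSucc) • EuclideanSpace.single i.castSucc (1 : ℝ) :
      EuclideanSpace ℝ (Fin (d + 1))) j = 0 := by
    rw [WithLp.ofLp_sum, Finset.sum_apply]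
    apply Finset.sum_eq_zero
    intro i _
    show gam' (x i.castSucc) *
      (EuclideanSpace.single i.castSucc (1 : ℝ) : EuclideanSpace ℝ (Fin (d + 1))) j = 0
    rw [EuclideanSpace.single_apply]
    by_cases hji : j = i.castSucc
    · rw [if_pos hji, mul_one, ← hji, hx j hj, gam'_zero]
    · rw [if_neg hji, mul_zero]
  have h4 : lam1 ^ 2 * α / (4 * lam2) * (2 * x (Fin.last d)) *
      (EuclideanSpace.single (Fin.last d) 1 : EuclideanSpace ℝ (Fin (d + 1))) j = 0 := by
    by_cases hjl : j = Fin.last d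
    · rw [← hjl, hx j hj]; ring
    · rw [EuclideanSpace.single_apply, if_neg hjl, mul_zero]
  rw [h1, h2, h3, h4]
  ring

lemma gradY_mem (d : ℕ) (α lam1 lam2 : ℝ) (K : ℕ) (x : EuclideanSpace ℝ (Fin (d + 1)))
    (y : EuclideanSpace ℝ (Fin (d + 2)))
    (hx : ∀ j : Fin (d + 1), K ≤ (j : ℕ) → x j = 0)
    (hy : ∀ i : Fin (d + 2), (i : ℕ) + K < d + 1 → y i = 0) :
    lam1 • Bapp d α x - (2 * lam2) • y ∈ Ysub d K := by
  apply mem_Ysub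
  intro i hi
  show lam1 * Bapp d α x i - (2 * lam2) * y i = 0
  have h1 : Bapp d α x i = 0 := by
    rw [Bapp_apply]
    exact Bapp_coord_zero d α K x hx i hi
  rw [h1, hy i hi]
  ring

/-- Alternating zero-chain property of `F_d`:
(a) at `x = 0, y = 0` the `x`-gradient lies in `X_1` and the `y`-gradient vanishes;
(b) if `x ∈ X_k` and `y ∈ Y_k`, then `∇ₓF_d(x,y) ∈ X_{k+1}` and `∇_yF_d(x,y) ∈ Y_k`;
(c) if `x ∈ X_{k+1}` and `y ∈ Y_k`, then `∇ₓF_d(x,y) ∈ X_{k+1}` and `∇_yF_d(x,y) ∈ Y_{k+1}`. -/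
theorem Fd_zero_chain (d : ℕ) (α lam1 lam2 : ℝ)
    (hα : α ∈ Set.Icc (0 : ℝ) 1) (h1 : 0 < lam1) (h2 : 0 < lam2) :
    (gradient (fun x => Fd d α lam1 lam2 x 0) 0 ∈ Xsub d 1 ∧
      gradient (Fd d α lam1 lam2 0) 0 = 0) ∧
    (∀ (k : ℕ) (x : EuclideanSpace ℝ (Fin (d + 1))) (y : EuclideanSpace ℝ (Fin (d + 2))),
      x ∈ Xsub d k → y ∈ Ysub d k →
        gradient (fun x' => Fd d α lam1 lam2 x' y) x ∈ Xsub d (k + 1) ∧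
        gradient (Fd d α lam1 lam2 x) y ∈ Ysub d k) ∧
    (∀ (k : ℕ) (x : EuclideanSpace ℝ (Fin (d + 1))) (y : EuclideanSpace ℝ (Fin (d + 2))),
      x ∈ Xsub d (k + 1) → y ∈ Ysub d k →
        gradient (fun x' => Fd d α lam1 lam2 x' y) x ∈ Xsub d (k + 1) ∧
        gradient (Fd d α lam1 lam2 x) y ∈ Ysub d (k + 1)) := by
  have hgx : ∀ (x : EuclideanSpace ℝ (Fin (d + 1))) (y : EuclideanSpace ℝ (Fin (d + 2))),
      gradient (fun x' => Fd d α lam1 lam2 x' y) x = gradX d α lam1 lam2 x y :=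
    fun x y => (hasGradientAt_Fd_x d α lam1 lam2 x y).gradient
  have hgy : ∀ (x : EuclideanSpace ℝ (Fin (d + 1))) (y : EuclideanSpace ℝ (Fin (d + 2))),
      gradient (Fd d α lam1 lam2 x) y = lam1 • Bapp d α x - (2 * lam2) • y :=
    fun x y => (hasGradientAt_Fd_y d α lam1 lam2 x y).gradient
  refine ⟨⟨?_, ?_⟩, ?_, ?_⟩
  · rw [hgx]
    exact gradX_mem d α lam1 lam2 0 0 0 (fun j _ => rfl) (fun i _ => rfl)
  · rw [hgy]
    ext i
    show lam1 * Bapp d α 0 i - (2 * lam2) * (0 : EuclideanSpace ℝ (Fin (d + 2))) i = 0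
    have h0 : Bapp d α 0 i = 0 := by
      rw [Bapp_apply]
      apply Finset.sum_eq_zero
      intro j _
      exact mul_zero _
    rw [h0]
    show lam1 * 0 - 2 * lam2 * 0 = 0
    ring
  · intro k x y hx hy
    refine ⟨?_, ?_⟩
    · rw [hgx]
      exact gradX_mem d α lam1 lam2 k x y
        (fun j hj => Xsub_coord hx j (by omega)) (fun i hi => Ysub_coord hy i hi)
    · rw [hgy]
      exact gradY_mem d α lam1 lam2 k x y
        (fun j hj => Xsub_coord hx j hj) (fun i hi => Ysub_coord hy i hi)
  · intro k x y hx hy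
    refine ⟨?_, ?_⟩
    · rw [hgx]
      exact gradX_mem d α lam1 lam2 k x y
        (fun j hj => Xsub_coord hx j hj) (fun i hi => Ysub_coord hy i hi)
    · rw [hgy]
      exact gradY_mem d α lam1 lam2 (k + 1) x y
        (fun j hj => Xsub_coord hx j hj) (fun i hi => Ysub_coord hy i (by omega))
end

section
/- Moreau-envelope descent bound for the catalyst outer loop: let Φ be L-weakly convex (e.g., Φ = max_y f(x,y) for L-smooth f, so Φ is 2κL-smooth and in particular L-weakly convex after rescaling), define Φ̂_t(x) = Φ(x) + L‖x − x^t‖², which is L-strongly convex with minimizer x̂^t = prox_{Φ/2L}(x^t), and let ∇Φ_{1/2L}(x^t) = 2L(x^t − x̂^t) be the Moreau-envelope gradient. If Φ̂_t(x^{t+1}) ≤ Φ̂_t(x̂^t) + b_{t+1}, then ‖∇Φ_{1/2L}(x^t)‖² ≤ 8L[Φ(x^t) − Φ(x^{t+1}) + b_{t+1}]. -/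
/-- Quadratic growth from a minimizer of a strongly convex function. -/
lemma strong_growth {E : Type*} [NormedAddCommGroup E] [InnerProductSpace ℝ E]
    (f : E → ℝ) (L : ℝ) (x xhat : E)
    (hconv : StrongConvexOn Set.univ L f)
    (hmin : IsMinOn f Set.univ xhat) :
    L / 2 * ‖x - xhat‖ ^ 2 ≤ f x - f xhat := by
  set c := L / 2 * ‖x - xhat‖ ^ 2 with hc
  have key : ∀ t ∈ Set.Ioo (0:ℝ) 1, (1 - t) * c ≤ f x - f xhat := by
    intro t ht
    have h1 := hconv.2 (Set.mem_univ x) (Set.mem_univ xhat) ht.1.le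
      (by linarith [ht.2] : (0:ℝ) ≤ 1 - t) (by ring)
    have h2 : f xhat ≤ f (t • x + (1 - t) • xhat) := hmin (Set.mem_univ _)
    simp only [smul_eq_mul] at h1
    have ht0 : 0 < t := ht.1
    rw [hc]
    nlinarith [h1, h2, mul_pos ht0 (by linarith [ht.2] : (0:ℝ) < 1 - t)]
  have htend : Filter.Tendsto (fun t : ℝ => (1 - t) * c) (nhdsWithin 0 (Set.Ioo 0 1)) (nhds c) := by
    have : Filter.Tendsto (fun t : ℝ => (1 - t) * c) (nhds 0) (nhds ((1 - 0) * c)) :=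
      ((continuous_const.sub continuous_id).mul continuous_const).tendsto 0
    simpa using this.mono_left nhdsWithin_le_nhds
  have hne : (nhdsWithin (0:ℝ) (Set.Ioo 0 1)).NeBot :=
    left_nhdsWithin_Ioo_neBot (by norm_num)
  exact le_of_tendsto htend (Filter.eventually_of_mem self_mem_nhdsWithin key)

/-- Moreau-envelope descent bound for the catalyst outer loop: let
`Φ̂_t(x) = Φ(x) + L‖x − xᵗ‖²` be `L`-strongly convex with minimizer
`x̂ᵗ = prox_{Φ/2L}(xᵗ)`, and suppose `Φ̂_t(xᵗ⁺¹) ≤ Φ̂_t(x̂ᵗ) + b`.  Then the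
Moreau-envelope gradient `∇Φ_{1/2L}(xᵗ) = 2L(xᵗ − x̂ᵗ)` satisfies
`‖∇Φ_{1/2L}(xᵗ)‖² ≤ 8L[Φ(xᵗ) − Φ(xᵗ⁺¹) + b]`. -/
theorem moreau_envelope_descent
    {E : Type*} [NormedAddCommGroup E] [InnerProductSpace ℝ E] [CompleteSpace E]
    (Φ : E → ℝ) (L : ℝ) (hL : 0 < L) (xt xnext xhat : E) (b : ℝ)
    (hconv : StrongConvexOn Set.univ L (fun x => Φ x + L * ‖x - xt‖ ^ 2))
    (hmin : IsMinOn (fun x => Φ x + L * ‖x - xt‖ ^ 2) Set.univ xhat)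
    (hstep : Φ xnext + L * ‖xnext - xt‖ ^ 2 ≤ Φ xhat + L * ‖xhat - xt‖ ^ 2 + b) :
    ‖(2 * L) • (xt - xhat)‖ ^ 2 ≤ 8 * L * (Φ xt - Φ xnext + b) := by
  have hg := strong_growth (fun x => Φ x + L * ‖x - xt‖ ^ 2) L xt xhat hconv hmin
  simp only [sub_self, norm_zero] at hg
  have hnorm : ‖(2 * L) • (xt - xhat)‖ ^ 2 = (2 * L) ^ 2 * ‖xt - xhat‖ ^ 2 := by
    rw [norm_smul, mul_pow, Real.norm_eq_abs, sq_abs]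
  have h1 : 0 ≤ L * ‖xnext - xt‖ ^ 2 := by positivity
  rw [hnorm]
  nlinarith [hg, hstep, h1, sq_nonneg ‖xt - xhat‖]
end
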